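/- Under the Brauerian representation with appropriate radices, the image of (the split equivalence corresponding to) the first projection is the first projection: if f : Fin (n·m) → Fin n is viewed in Set_ω^op as an arrow and R = J(f^op) is the split equivalence of the first projection, then F_ab(R), for appropriate radices, equals the function i ↦ ⌊i/m⌋ (the first projection of the · product structure). Similarly, the diagonal split equivalence is mapped to the diagonal ŵ(i) = i·(n) + i. -/

import Mathlib

/-- The weight of position `x` for radices `r`: the product of the radices at
positions after `x`. -/
def wgt {k : ℕ} (r : Fin k → ℕ) (x : Fin k) : ℕ :=
  ∏ y ∈ Finset.univ.filter (fun y => x < y), r y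

/-- Mixed-radix encoding: `enc r c = Σ_x c x · ∏_{y > x} r y`. -/
def enc {k : ℕ} (r c : Fin k → ℕ) : ℕ := ∑ x, c x * wgt r x

/-- The Brauerian representation `F_ab(R)` of an equivalence relation `R` on
`Fin (n+m)` with radices `r` : the relation consisting of the pairs `(i,j)`
such that the concatenation `c` of the mixed-radix digit expansions of `i`
(first `n` radices) and `j` (last `m` radices) satisfies `c x = c y` whenever
`(x,y) ∈ R`. -/
def Fab (n m : ℕ) (r : Fin (n + m) → ℕ) (R : Setoid (Fin (n + m))) :
    ℕ → ℕ → Prop := fun i j =>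
  ∃ c : Fin (n + m) → ℕ,
    (∀ x, c x < r x) ∧
    (∀ x y, R.r x y → c x = c y) ∧
    i = enc (fun x : Fin n => r (Fin.castAdd m x)) (fun x => c (Fin.castAdd m x)) ∧
    j = enc (fun x : Fin m => r (Fin.natAdd n x)) (fun x => c (Fin.natAdd n x))

/-- The split equivalence `J(f)` on `Fin (n+m)` of `f : Fin m → Fin n`, with
classes `{i} ∪ {j + n : f j = i}`. -/
def Jrel {n m : ℕ} (f : Fin m → Fin n) : Setoid (Fin (n + m)) :=
  Setoid.ker (Fin.addCases (motive := fun _ => Fin n) id f)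

lemma wgt_eq {k : ℕ} (r : Fin k → ℕ) (x : Fin k) :
    wgt r x = ∏ y, if x < y then r y else 1 := by
  rw [wgt, Finset.prod_filter]

lemma wgt_natAdd {n m : ℕ} (r : Fin (n + m) → ℕ) (x : Fin m) :
    wgt r (Fin.natAdd n x) = wgt (fun y : Fin m => r (Fin.natAdd n y)) x := by
  rw [wgt_eq, wgt_eq, Fin.prod_univ_add]
  have h1 : ∀ i : Fin n,
      (if Fin.natAdd n x < Fin.castAdd m i then r (Fin.castAdd m i) else 1) = 1 := by
    intro i
    exact if_neg (by rw [Fin.lt_def]; have := i.isLt; simp; omega)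
  have h2 : ∀ i : Fin m,
      (if Fin.natAdd n x < Fin.natAdd n i then r (Fin.natAdd n i) else 1)
        = (if x < i then r (Fin.natAdd n i) else 1) := by
    intro i
    simp only [Fin.lt_def, Fin.coe_natAdd, Nat.add_lt_add_iff_left]
  simp only [h1, h2, Finset.prod_const_one, one_mul]

lemma wgt_castAdd {n m : ℕ} (r : Fin (n + m) → ℕ) (x : Fin n) :
    wgt r (Fin.castAdd m x) =
      wgt (fun y : Fin n => r (Fin.castAdd m y)) x * ∏ y : Fin m, r (Fin.natAdd n y) := by
  rw [wgt_eq, wgt_eq, Fin.prod_univ_add]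
  have h1 : ∀ i : Fin n,
      (if Fin.castAdd m x < Fin.castAdd m i then r (Fin.castAdd m i) else 1)
        = (if x < i then r (Fin.castAdd m i) else 1) := by
    intro i; simp only [Fin.lt_def, Fin.coe_castAdd]
  have h2 : ∀ i : Fin m,
      (if Fin.castAdd m x < Fin.natAdd n i then r (Fin.natAdd n i) else 1)
        = r (Fin.natAdd n i) := by
    intro i
    exact if_pos (by rw [Fin.lt_def]; have := x.isLt; simp; omega)
  simp only [h1, h2]

lemma enc_split {n m : ℕ} (r c : Fin (n + m) → ℕ) :
    enc r c =
      enc (fun y : Fin n => r (Fin.castAdd m y)) (fun y => c (Fin.castAdd m y)) *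
        (∏ y : Fin m, r (Fin.natAdd n y)) +
      enc (fun y : Fin m => r (Fin.natAdd n y)) (fun y => c (Fin.natAdd n y)) := by
  rw [enc, Fin.sum_univ_add]
  simp only [wgt_castAdd, wgt_natAdd, enc, Finset.sum_mul, mul_assoc]

lemma wgt_one (r : Fin 1 → ℕ) (x : Fin 1) : wgt r x = 1 := by
  rw [wgt]
  have : Finset.univ.filter (fun y => x < y) = (∅ : Finset (Fin 1)) := by
    ext y
    simp only [Finset.mem_filter, Finset.mem_univ, true_and, Finset.notMem_empty, iff_false]
    rw [Fin.lt_def]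
    have := x.isLt; have := y.isLt; omega
  rw [this, Finset.prod_empty]

lemma enc_one (r c : Fin 1 → ℕ) : enc r c = c 0 := by
  simp [enc, wgt_one]

lemma enc_lt : ∀ {k : ℕ} (r c : Fin k → ℕ), (∀ x, c x < r x) → enc r c < ∏ x, r x := by
  intro k
  induction k with
  | zero => intro r c _; simp [enc]
  | succ k ih =>
    intro r c h
    rw [enc_split (n := k) (m := 1) r c, Fin.prod_univ_add (f := r)]
    have hB : (∏ y : Fin 1, r (Fin.natAdd k y)) = r (Fin.natAdd k 0) := by
      simp
    rw [hB, enc_one]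
    have hq := ih (fun y => r (Fin.castAdd 1 y)) (fun y => c (Fin.castAdd 1 y))
      (fun x => h _)
    have hd : c (Fin.natAdd k 0) < r (Fin.natAdd k 0) := h _
    set q := enc (fun y : Fin k => r (Fin.castAdd 1 y)) (fun y => c (Fin.castAdd 1 y)) with hqdef
    set B := r (Fin.natAdd k 0) with hBdef
    set P := ∏ i : Fin k, r (Fin.castAdd 1 i) with hPdef
    calc q * B + c (Fin.natAdd k 0) < q * B + B := by omega
      _ = (q + 1) * B := by ring
      _ ≤ P * B := Nat.mul_le_mul_right _ hq

lemma enc_exists : ∀ {k : ℕ} (r : Fin k → ℕ), (∀ x, 1 ≤ r x) → ∀ i, i < ∏ x, r x →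
    ∃ c : Fin k → ℕ, (∀ x, c x < r x) ∧ enc r c = i := by
  intro k
  induction k with
  | zero =>
    intro r _ i hi
    simp only [Finset.univ_eq_empty, Finset.prod_empty] at hi
    interval_cases i
    exact ⟨fun x => 0, fun x => x.elim0, by simp [enc]⟩
  | succ k ih =>
    intro r hr i hi
    set B := r (Fin.natAdd k 0) with hBdef
    have hB : 0 < B := hr _
    rw [Fin.prod_univ_add (f := r)] at hi
    have hB1 : (∏ y : Fin 1, r (Fin.natAdd k y)) = B := by simp [hBdef]
    rw [hB1] at hi
    have hq : i / B < ∏ y : Fin k, r (Fin.castAdd 1 y) := by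
      rw [Nat.div_lt_iff_lt_mul hB]; exact hi
    obtain ⟨c', hc'lt, hc'⟩ := ih (fun y => r (Fin.castAdd 1 y)) (fun y => hr _) (i / B) hq
    refine ⟨Fin.addCases (motive := fun _ => ℕ) c' (fun _ => i % B), ?_, ?_⟩
    · intro x
      refine Fin.addCases (motive := fun x =>
        Fin.addCases (motive := fun _ => ℕ) c' (fun _ => i % B) x < r x) ?_ ?_ x
      · intro y; rw [Fin.addCases_left]; exact hc'lt y
      · intro y
        rw [Fin.addCases_right]
        have hy : y = 0 := Subsingleton.elim y 0
        rw [hy]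
        exact Nat.mod_lt _ hB
    · rw [enc_split (n := k) (m := 1), enc_one]
      simp only [Fin.addCases_left, Fin.addCases_right, hB1, hc']
      rw [Nat.mul_comm (i / B) B]
      exact Nat.div_add_mod i B

lemma enc_div {n m : ℕ} (r c : Fin (n + m) → ℕ) (h : ∀ x, c x < r x) :
    enc r c / (∏ y : Fin m, r (Fin.natAdd n y)) =
      enc (fun y : Fin n => r (Fin.castAdd m y)) (fun y => c (Fin.castAdd m y)) := by
  have hB : 0 < ∏ y : Fin m, r (Fin.natAdd n y) :=
    Finset.prod_pos fun y _ => lt_of_le_of_lt (Nat.zero_le _) (h _)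
  have hrem := enc_lt (fun y : Fin m => r (Fin.natAdd n y))
    (fun y => c (Fin.natAdd n y)) (fun y => h _)
  rw [enc_split (n := n) (m := m), Nat.add_comm, Nat.add_mul_div_right _ _ hB,
    Nat.div_eq_of_lt hrem, Nat.zero_add]

/-- The Brauerian representation maps the split equivalence of the first
projection to the first projection `i ↦ ⌊i/B⌋` (where `B` is the product of
the radices of the second factor), and the split equivalence of the diagonal
to the diagonal `i ↦ i·A + i` (where `A` is the product of the radices). -/
theorem stmt12 :
    (∀ (n m : ℕ) (r : Fin (n + m) → ℕ), (∀ x, 2 ≤ r x) →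
      ∀ i j,
        Fab (n + m) n
          (Fin.addCases (motive := fun _ => ℕ) r (fun x : Fin n => r (Fin.castAdd m x)))
          (Jrel (Fin.castAdd m : Fin n → Fin (n + m))) i j ↔
        (i < (∏ x, r x) ∧ j = i / ∏ x : Fin m, r (Fin.natAdd n x))) ∧
    (∀ (n : ℕ) (a : Fin n → ℕ), (∀ x, 2 ≤ a x) →
      ∀ i j,
        Fab n (n + n)
          (Fin.addCases (motive := fun _ => ℕ) a
            (Fin.addCases (motive := fun _ => ℕ) a a))
          (Jrel (Fin.addCases (motive := fun _ => Fin n) id id : Fin (n + n) → Fin n)) i j ↔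
        (i < (∏ x, a x) ∧ j = i * (∏ x, a x) + i)) := by
  constructor
  · -- Part 1: first projection
    intro n m r hr i j
    constructor
    · rintro ⟨c, hclt, hcrel, hi, hj⟩
      simp only [Fin.addCases_left, Fin.addCases_right] at hi hj
      have hlt1 : ∀ x : Fin (n + m), c (Fin.castAdd n x) < r x := by
        intro x
        have := hclt (Fin.castAdd n x)
        rwa [Fin.addCases_left] at this
      have hdig : ∀ x : Fin n,
          c (Fin.natAdd (n + m) x) = c (Fin.castAdd n (Fin.castAdd m x)) := by
        intro x
        refine hcrel _ _ ?_
        show Fin.addCases (motive := fun _ => Fin (n + m)) id (Fin.castAdd m)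
            (Fin.natAdd (n + m) x)
          = Fin.addCases (motive := fun _ => Fin (n + m)) id (Fin.castAdd m)
            (Fin.castAdd n (Fin.castAdd m x))
        rw [Fin.addCases_left, Fin.addCases_right]
        rfl
      refine ⟨?_, ?_⟩
      · rw [hi]; exact enc_lt _ _ hlt1
      · rw [hi, hj, enc_div _ _ hlt1]
        congr 1
        funext x
        exact hdig x
    · rintro ⟨hi, hj⟩
      obtain ⟨c1, hlt, hencc⟩ :=
        enc_exists r (fun x => le_trans one_le_two (hr x)) i hi
      refine ⟨Fin.addCases (motive := fun _ => ℕ) c1 (fun x => c1 (Fin.castAdd m x)),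
        ?_, ?_, ?_, ?_⟩
      · intro x
        refine Fin.addCases ?_ ?_ x
        · intro y
          rw [Fin.addCases_left, Fin.addCases_left]
          exact hlt y
        · intro y
          rw [Fin.addCases_right, Fin.addCases_right]
          exact hlt _
      · have hcomp : ∀ x : Fin ((n + m) + n),
            Fin.addCases (motive := fun _ => ℕ) c1 (fun x => c1 (Fin.castAdd m x)) x
              = c1 (Fin.addCases (motive := fun _ => Fin (n + m)) id (Fin.castAdd m) x) := by
          intro x
          refine Fin.addCases ?_ ?_ x <;> intro y <;>
            simp only [Fin.addCases_left, Fin.addCases_right, id_eq]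
        intro x y hxy
        have hxy' : Fin.addCases (motive := fun _ => Fin (n + m)) id (Fin.castAdd m) x
            = Fin.addCases (motive := fun _ => Fin (n + m)) id (Fin.castAdd m) y := hxy
        rw [hcomp x, hcomp y, hxy']
      · simp only [Fin.addCases_left]
        exact hencc.symm
      · simp only [Fin.addCases_right]
        rw [hj, ← hencc, enc_div _ _ hlt]
  · -- Part 2: diagonal
    intro n a ha i j
    constructor
    · rintro ⟨c, hclt, hcrel, hi, hj⟩
      simp only [Fin.addCases_left, Fin.addCases_right] at hi hj
      have hlt1 : ∀ x : Fin n, c (Fin.castAdd (n + n) x) < a x := by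
        intro x
        have := hclt (Fin.castAdd (n + n) x)
        rwa [Fin.addCases_left] at this
      have hg : ∀ x : Fin n, ∀ y : Fin (n + (n + n)),
          Fin.addCases (motive := fun _ => Fin n) id
            (Fin.addCases (motive := fun _ => Fin n) id id) y = x →
          c y = c (Fin.castAdd (n + n) x) := by
        intro x y hy
        refine hcrel _ _ ?_
        show Fin.addCases (motive := fun _ => Fin n) id
            (Fin.addCases (motive := fun _ => Fin n) id id) y
          = Fin.addCases (motive := fun _ => Fin n) id
            (Fin.addCases (motive := fun _ => Fin n) id id) (Fin.castAdd (n + n) x)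
        rw [hy, Fin.addCases_left]
        rfl
      have hd1 : ∀ x : Fin n,
          c (Fin.natAdd n (Fin.castAdd n x)) = c (Fin.castAdd (n + n) x) := by
        intro x
        refine hg x _ ?_
        rw [Fin.addCases_right, Fin.addCases_left]
        rfl
      have hd2 : ∀ x : Fin n,
          c (Fin.natAdd n (Fin.natAdd n x)) = c (Fin.castAdd (n + n) x) := by
        intro x
        refine hg x _ ?_
        rw [Fin.addCases_right, Fin.addCases_right]
        rfl
      have hi' : i < ∏ x, a x := by rw [hi]; exact enc_lt _ _ hlt1
      refine ⟨hi', ?_⟩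
      rw [hj, enc_split (n := n) (m := n)]
      simp only [Fin.addCases_left, Fin.addCases_right, hd1, hd2]
      rw [← hi]
    · rintro ⟨hi, hj⟩
      obtain ⟨c1, hlt, hencc⟩ :=
        enc_exists a (fun x => le_trans one_le_two (ha x)) i hi
      refine ⟨Fin.addCases (motive := fun _ => ℕ) c1
        (Fin.addCases (motive := fun _ => ℕ) c1 c1), ?_, ?_, ?_, ?_⟩
      · intro x
        refine Fin.addCases ?_ ?_ x
        · intro y
          rw [Fin.addCases_left, Fin.addCases_left]
          exact hlt y
        · intro y
          refine Fin.addCases ?_ ?_ y <;> intro z <;>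
            simp only [Fin.addCases_left, Fin.addCases_right] <;> exact hlt z
      · have hcomp : ∀ x : Fin (n + (n + n)),
            Fin.addCases (motive := fun _ => ℕ) c1
              (Fin.addCases (motive := fun _ => ℕ) c1 c1) x
              = c1 (Fin.addCases (motive := fun _ => Fin n) id
                  (Fin.addCases (motive := fun _ => Fin n) id id) x) := by
          intro x
          refine Fin.addCases ?_ ?_ x
          · intro y
            simp only [Fin.addCases_left, id_eq]
          · intro y
            refine Fin.addCases ?_ ?_ y <;> intro z <;>
              simp only [Fin.addCases_left, Fin.addCases_right, id_eq]
        intro x y hxy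
        have hxy' : Fin.addCases (motive := fun _ => Fin n) id
            (Fin.addCases (motive := fun _ => Fin n) id id) x
          = Fin.addCases (motive := fun _ => Fin n) id
            (Fin.addCases (motive := fun _ => Fin n) id id) y := hxy
        rw [hcomp x, hcomp y, hxy']
      · simp only [Fin.addCases_left]
        exact hencc.symm
      · rw [hj, enc_split (n := n) (m := n)]
        simp only [Fin.addCases_left, Fin.addCases_right]
        rw [hencc]
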